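/- Let (R,𝔪,k) be a noetherian local ring, r ∈ 𝔪, and S = R/(r). If Tor_2^R(S, k) = 0 and r ≠ 0, then r is a nonzerodivisor on R. -/

import Mathlib

open CategoryTheory Limits IsLocalRing TensorProduct MonoidalCategory Pointwise

universe u



noncomputable section

variable (R : Type u) [CommRing R] [IsLocalRing R]

/-- Auxiliary tower: module together with the submodule to resolve next. -/
def resAux : ℕ → Σ M : ModuleCat.{u} R, Submodule R M
  | 0 => ⟨ModuleCat.of R R, (maximalIdeal R : Submodule R R)⟩
  | n + 1 =>
    let p := resAux n
    ⟨ModuleCat.of R (p.2 →₀ R),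
      LinearMap.ker (Finsupp.linearCombination R ((↑) : p.2 → p.1))⟩

/-- The differentials. -/
def resD (n : ℕ) : (resAux R (n + 1)).1 →ₗ[R] (resAux R n).1 :=
  Finsupp.linearCombination R ((↑) : (resAux R n).2 → (resAux R n).1)

lemma resD_range (n : ℕ) : LinearMap.range (resD R n) = (resAux R n).2 := by
  show LinearMap.range (Finsupp.linearCombination R _) = _
  rw [Finsupp.range_linearCombination, Subtype.range_coe, Submodule.span_eq]

lemma resD_ker (n : ℕ) : LinearMap.ker (resD R n) = (resAux R (n + 1)).2 := rfl

lemma resD_comp_apply (n : ℕ) (x : (resAux R (n + 2)).1) :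
    resD R n (resD R (n + 1) x) = 0 := by
  have h : resD R (n + 1) x ∈ LinearMap.range (resD R (n + 1)) :=
    LinearMap.mem_range_self _ x
  rw [resD_range, ← resD_ker] at h
  exact h

/-- The free resolution complex of the residue field. -/
def resC : ChainComplex (ModuleCat.{u} R) ℕ :=
  ChainComplex.of (fun n => (resAux R n).1) (fun n => ModuleCat.ofHom (resD R n))
    (fun n => ModuleCat.hom_ext (LinearMap.ext fun x => resD_comp_apply R n x))

lemma resC_d (n : ℕ) : (resC R).d (n + 1) n = ModuleCat.ofHom (resD R n) := by
  unfold resC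
  exact ChainComplex.of_d (fun n => (resAux R n).1) (fun n => ModuleCat.ofHom (resD R n)) _

/-- The augmentation `R → k`. -/
def resPi0 : (resAux R 0).1 ⟶ ModuleCat.of R (ResidueField R) :=
  ModuleCat.ofHom (maximalIdeal R).mkQ

lemma resPi0_surjective : Function.Surjective (resPi0 R) :=
  Submodule.mkQ_surjective (maximalIdeal R)

def resPi : resC R ⟶ (ChainComplex.single₀ (ModuleCat.{u} R)).obj
    (ModuleCat.of R (ResidueField R)) :=
  (ChainComplex.toSingle₀Equiv _ _).symm ⟨resPi0 R, by
    rw [resC_d]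
    apply ModuleCat.hom_ext
    apply LinearMap.ext
    intro x
    have h : resD R 0 x ∈ (resAux R 0).2 := by
      rw [← resD_range]; exact LinearMap.mem_range_self _ x
    exact (Submodule.Quotient.mk_eq_zero _).2 h⟩

lemma resPi_f_zero : (resPi R).f 0 = resPi0 R := by
  unfold resPi
  apply ChainComplex.toSingle₀Equiv_symm_apply_f_zero _

instance resC_projective (n : ℕ) : Projective ((resC R).X n) := by
  obtain (_ | n) := n
  · exact ModuleCat.projective_of_free.{u, u} (Module.Basis.singleton PUnit.{u+1} R)
  · exact ModuleCat.projective_of_free.{u, u}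
      (Finsupp.basisSingleOne (R := R) (ι := (resAux R n).2))

lemma resC_exactAt_succ (n : ℕ) : (resC R).ExactAt (n + 1) := by
  rw [HomologicalComplex.exactAt_iff' _ (n + 2) (n + 1) n (by simp) (by simp),
    ShortComplex.moduleCat_exact_iff]
  intro x hx
  have hx0 : (resC R).d (n + 1) n x = 0 := hx
  rw [resC_d] at hx0
  have hx' : x ∈ LinearMap.ker (resD R n) := hx0
  rw [resD_ker, ← resD_range] at hx'
  obtain ⟨y, hy⟩ := hx'
  refine ⟨y, ?_⟩
  show (resC R).d (n + 2) (n + 1) y = x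
  rw [resC_d]; exact hy

/-- The projective resolution of the residue field. -/
def resolution : ProjectiveResolution (ModuleCat.of R (ResidueField R)) where
  complex := resC R
  π := resPi R
  quasiIso := ⟨fun n => by
    cases n with
    | zero =>
      rw [ChainComplex.quasiIsoAt₀_iff, ShortComplex.quasiIso_iff_of_zeros']
      · refine ⟨?_, ?_⟩
        · rw [ShortComplex.moduleCat_exact_iff]
          intro x hx
          have hx0 : (resPi R).f 0 x = 0 := hx
          rw [resPi_f_zero] at hx0
          have hx' : resPi0 R x = 0 := hx0
          have hm : x ∈ (resAux R 0).2 :=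
            (Submodule.Quotient.mk_eq_zero _).1 hx'
          have hm' : x ∈ LinearMap.range (resD R 0) := by
            rw [resD_range]; exact hm
          obtain ⟨y, hy⟩ := hm'
          refine ⟨y, ?_⟩
          show (resC R).d 1 0 y = x
          rw [resC_d]; exact hy
        · show Epi ((resPi R).f 0)
          rw [resPi_f_zero]
          exact (ModuleCat.epi_iff_surjective (resPi0 R)).2 (resPi0_surjective R)
      all_goals rfl
    | succ n =>
      rw [quasiIsoAt_iff_exactAt']
      · exact resC_exactAt_succ R n
      · apply ChainComplex.exactAt_succ_single_obj⟩

end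



section helpers

variable {R : Type u} [CommRing R]

lemma one_tmul_surj (I : Ideal R) {M : Type u} [AddCommGroup M] [Module R M]
    (t : (R ⧸ I) ⊗[R] M) : ∃ m : M, (1 : R ⧸ I) ⊗ₜ[R] m = t := by
  obtain ⟨m, hm⟩ := Submodule.Quotient.mk_surjective _
    (TensorProduct.quotTensorEquivQuotSMul M I t)
  refine ⟨m, (TensorProduct.quotTensorEquivQuotSMul M I).injective ?_⟩
  have h1 : (TensorProduct.quotTensorEquivQuotSMul M I) ((1 : R ⧸ I) ⊗ₜ[R] m)
      = Submodule.Quotient.mk m := by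
    rw [show (1 : R ⧸ I) = Ideal.Quotient.mk I 1 from (map_one _).symm,
      TensorProduct.quotTensorEquivQuotSMul_mk_tmul, one_smul]
  rw [h1, hm]

lemma mem_smul_top_of_one_tmul_eq_zero (I : Ideal R) {M : Type u} [AddCommGroup M]
    [Module R M] {m : M} (h : (1 : R ⧸ I) ⊗ₜ[R] m = 0) :
    m ∈ I • (⊤ : Submodule R M) := by
  have h1 : (TensorProduct.quotTensorEquivQuotSMul M I) ((1 : R ⧸ I) ⊗ₜ[R] m)
      = Submodule.Quotient.mk m := by
    rw [show (1 : R ⧸ I) = Ideal.Quotient.mk I 1 from (map_one _).symm,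
      TensorProduct.quotTensorEquivQuotSMul_mk_tmul, one_smul]
  rw [h, map_zero] at h1
  exact (Submodule.Quotient.mk_eq_zero _).1 h1.symm

lemma finsupp_smul_eq_zero_mem {α : Type u} {r : R} {f : α →₀ R} (hf : r • f = 0) :
    f ∈ (LinearMap.ker (LinearMap.lsmul R R r)) • (⊤ : Submodule R (α →₀ R)) := by
  classical
  rw [← Finsupp.sum_single f, Finsupp.sum]
  apply Submodule.sum_mem
  intro a _
  have hfa : r * f a = 0 := by
    have := DFunLike.congr_fun hf a
    simpa using this
  have h1 : Finsupp.single a (f a) = (f a) • Finsupp.single a (1 : R) := by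
    rw [Finsupp.smul_single, smul_eq_mul, mul_one]
  rw [h1]
  refine Submodule.smul_mem_smul ?_ Submodule.mem_top
  simpa [LinearMap.mem_ker] using hfa

end helpers

/-- Let `(R, 𝔪, k)` be a noetherian local ring, `r ∈ 𝔪`, and `S = R/(r)`.
If `Tor₂^R(S, k) = 0` and `r ≠ 0`, then `r` is a nonzerodivisor on `R`. -/
theorem nonzerodivisor_of_tor_two_zero (R : Type u) [CommRing R] [IsNoetherianRing R]
    [IsLocalRing R] (r : R) (hr : r ∈ IsLocalRing.maximalIdeal R) (hr0 : r ≠ 0)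
    (h : IsZero (((Tor (ModuleCat.{u} R) 2).obj
        (ModuleCat.of R (R ⧸ Ideal.span {r}))).obj
      (ModuleCat.of R (IsLocalRing.ResidueField R)))) :
    ∀ x : R, r * x = 0 → x = 0 := by
  classical
  set I : Ideal R := Ideal.span {r} with hI
  set S' : ModuleCat.{u} R := ModuleCat.of R (R ⧸ I) with hS'
  set F : ModuleCat.{u} R ⥤ ModuleCat.{u} R := (tensoringLeft (ModuleCat.{u} R)).obj S'
    with hF
  set P : ProjectiveResolution (ModuleCat.of R (IsLocalRing.ResidueField R)) :=
    resolution R with hP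
  -- transfer the Tor vanishing to exactness of the tensored resolution
  have hzero : IsZero ((HomologicalComplex.homologyFunctor (ModuleCat.{u} R)
      (ComplexShape.down ℕ) 2).obj
      ((F.mapHomologicalComplex (ComplexShape.down ℕ)).obj P.complex)) :=
    h.of_iso (P.isoLeftDerivedObj F 2).symm
  have h2 : ((F.mapHomologicalComplex (ComplexShape.down ℕ)).obj P.complex).ExactAt 2 :=
    (HomologicalComplex.exactAt_iff_isZero_homology _ _).2 hzero
  rw [HomologicalComplex.exactAt_iff' _ 3 2 1 (by simp) (by simp)] at h2
  rw [ShortComplex.moduleCat_exact_iff] at h2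
  -- identify the differentials
  have hd21 : ((F.mapHomologicalComplex (ComplexShape.down ℕ)).obj P.complex).d 2 1
      = F.map (ModuleCat.ofHom (resD R 1)) := by
    rw [Functor.mapHomologicalComplex_obj_d]
    congr 1
  have hd32 : ((F.mapHomologicalComplex (ComplexShape.down ℕ)).obj P.complex).d 3 2
      = F.map (ModuleCat.ofHom (resD R 2)) := by
    rw [Functor.mapHomologicalComplex_obj_d]
    congr 1
  -- the annihilator of r
  set Z : Ideal R := LinearMap.ker (LinearMap.lsmul R R r) with hZ
  suffices hZbot : Z = ⊥ by
    intro x hx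
    have hxZ : x ∈ Z := by
      rw [hZ, LinearMap.mem_ker, LinearMap.lsmul_apply, smul_eq_mul]
      exact hx
    rw [hZbot] at hxZ
    simpa using hxZ
  apply Submodule.eq_bot_of_le_smul_of_le_jacobson_bot (IsLocalRing.maximalIdeal R) Z
    (IsNoetherian.noetherian Z) ?_ (IsLocalRing.maximalIdeal_le_jacobson ⊥)
  intro z hzZ
  have hrz : r * z = 0 := by
    have := LinearMap.mem_ker.1 hzZ
    simpa using this
  -- z is in the maximal ideal
  have hzm : z ∈ IsLocalRing.maximalIdeal R := by
    by_contra hzm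
    rw [IsLocalRing.mem_maximalIdeal, mem_nonunits_iff, not_not] at hzm
    obtain ⟨v, hv⟩ := hzm.exists_right_inv
    apply hr0
    calc r = r * (z * v) := by rw [hv, mul_one]
      _ = (r * z) * v := by ring
      _ = 0 := by rw [hrz, zero_mul]
  -- lift z through d1
  have h1 : z ∈ LinearMap.range (resD R 0) := by rw [resD_range]; exact hzm
  obtain ⟨p₁, hp₁⟩ := h1
  -- r • p₁ is a cycle, hence a boundary
  have h2' : r • p₁ ∈ LinearMap.range (resD R 1) := by
    rw [resD_range, ← resD_ker, LinearMap.mem_ker, map_smul, hp₁]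
    show r • z = 0
    rw [smul_eq_mul]
    exact hrz
  obtain ⟨p₂, hp₂⟩ := h2'
  -- 1 ⊗ p₂ is a cycle in the tensored complex
  have hcyc : ((F.mapHomologicalComplex (ComplexShape.down ℕ)).obj P.complex).d 2 1
      ((1 : R ⧸ I) ⊗ₜ[R] p₂) = 0 := by
    rw [hd21]
    show (1 : R ⧸ I) ⊗ₜ[R] (resD R 1 p₂) = 0
    rw [hp₂]
    have e1 : (1 : R ⧸ I) ⊗ₜ[R] (r • p₁) = (r • (1 : R ⧸ I)) ⊗ₜ[R] p₁ :=
      (TensorProduct.smul_tmul r _ _).symm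
    have e2 : r • (1 : R ⧸ I) = 0 := by
      rw [show (1 : R ⧸ I) = Submodule.Quotient.mk (1 : R) from rfl,
        ← Submodule.Quotient.mk_smul, smul_eq_mul, mul_one,
        Submodule.Quotient.mk_eq_zero]
      exact Submodule.mem_span_singleton_self r
    rw [e1, e2, TensorProduct.zero_tmul]
  obtain ⟨t', ht'⟩ := h2 ((1 : R ⧸ I) ⊗ₜ[R] p₂) hcyc
  obtain ⟨p₃, hp₃⟩ := one_tmul_surj (M := (resAux R (2 + 1)).1) I t'
  -- p₂ - d₃ p₃ is killed by 1 ⊗ -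
  have hkey : (1 : R ⧸ I) ⊗ₜ[R] (p₂ - resD R 2 p₃) = 0 := by
    rw [TensorProduct.tmul_sub, sub_eq_zero]
    have h32 : F.map (ModuleCat.ofHom (resD R 2)) ((1 : R ⧸ I) ⊗ₜ[R] p₃) = (1 : R ⧸ I) ⊗ₜ[R] p₂ := by
      subst hp₃
      rw [← hd32]
      exact ht'
    have h32' : (1 : R ⧸ I) ⊗ₜ[R] (resD R 2 p₃) = (1 : R ⧸ I) ⊗ₜ[R] p₂ := h32
    exact h32'.symm
  have hmem : p₂ - resD R 2 p₃ ∈ I • (⊤ : Submodule R _) :=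
    mem_smul_top_of_one_tmul_eq_zero I hkey
  rw [hI, Submodule.ideal_span_singleton_smul] at hmem
  have hmem' : p₂ - resD R 2 p₃ ∈
      (r • (⊤ : Submodule R _)).toAddSubmonoid := hmem
  rw [Submodule.pointwise_smul_toAddSubmonoid] at hmem'
  obtain ⟨p₂', -, hp₂'⟩ := (AddSubmonoid.mem_smul_pointwise_iff_exists _ _ _).1 hmem'
  -- r • (p₁ - d₂ p₂') = 0
  have h6 : r • (p₁ - resD R 1 p₂') = 0 := by
    rw [smul_sub, ← hp₂, ← map_smul, hp₂', map_sub, resD_comp_apply, sub_zero, sub_self]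
  have h7 := finsupp_smul_eq_zero_mem (r := r) h6
  -- conclude z ∈ 𝔪 • Z
  have h8 : z = resD R 0 (p₁ - resD R 1 p₂') := by
    rw [map_sub, resD_comp_apply, sub_zero, hp₁]
  have h9 : resD R 0 (p₁ - resD R 1 p₂') ∈ Z • (resAux R 0).2 := by
    have hmap := Submodule.mem_map_of_mem (f := resD R 0) h7
    erw [Submodule.map_smul'', Submodule.map_top, resD_range] at hmap
    exact hmap
  have h10 : z ∈ Z • (IsLocalRing.maximalIdeal R : Ideal R) := by rw [h8]; exact h9
  rwa [Ideal.smul_eq_mul, mul_comm, ← Ideal.smul_eq_mul] at h10
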